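/- Let θ, θ₀ ∈ ℝ, let z₀ ∈ ℤ be a minimizer over z ∈ ℤ of |θ₀ + 2πz|, and set φ₀ = θ₀ + 2πz₀. Then −cos θ ≤ (1/2)·sinc(φ₀)·(θ + 2πz₀)² − cos φ₀ − (1/2)·φ₀·sin φ₀. -/

import Mathlib

open Real

noncomputable def sinc (x : ℝ) : ℝ := if x = 0 then 1 else Real.sin x / x

lemma sinc_abs (y : ℝ) : _root_.sinc |y| = _root_.sinc y := by
  rcases abs_cases y with ⟨h, _⟩ | ⟨h, _⟩
  · rw [h]
  · rw [h]
    unfold _root_.sinc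
    rcases eq_or_ne y 0 with rfl | hy
    · simp
    · rw [if_neg (neg_ne_zero.2 hy), if_neg hy, Real.sin_neg]
      field_simp

lemma sinc_mul_sq (y : ℝ) : _root_.sinc y * y ^ 2 = y * Real.sin y := by
  unfold _root_.sinc
  rcases eq_or_ne y 0 with rfl | hy
  · simp
  · rw [if_neg hy]; field_simp

/-- concavity bound: for `0 ≤ u ≤ v ≤ π`, `u * sin v ≤ v * sin u`. -/
lemma sin_concave_bound {u v : ℝ} (h0 : 0 ≤ u) (huv : u ≤ v) (hv : v ≤ π) :
    u * Real.sin v ≤ v * Real.sin u := by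
  rcases eq_or_lt_of_le (h0.trans huv) with rfl | hvpos
  · simp
  have h1 : (1 - u / v) • Real.sin 0 + (u / v) • Real.sin v ≤
      Real.sin ((1 - u / v) • (0 : ℝ) + (u / v) • v) := by
    apply strictConcaveOn_sin_Icc.concaveOn.2
    · exact ⟨le_rfl, Real.pi_pos.le⟩
    · exact ⟨(h0.trans huv), hv⟩
    · have : u / v ≤ 1 := div_le_one_of_le₀ huv (h0.trans huv)
      linarith
    · positivity
    · ring
  have hveq : (1 - u / v) • (0 : ℝ) + (u / v) • v = u := by
    rw [smul_zero, zero_add, smul_eq_mul, div_mul_cancel₀ u hvpos.ne']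
  rw [hveq, Real.sin_zero] at h1
  simp only [smul_eq_mul, mul_zero, zero_add] at h1
  calc u * Real.sin v = v * (u / v * Real.sin v) := by field_simp
    _ ≤ v * Real.sin u := by
        apply mul_le_mul_of_nonneg_left h1 hvpos.le

/-- `2a(1+cos a) ≤ sin a (π² - a²)` for `a ∈ [0, π]`. -/
lemma F_bound {a : ℝ} (h0 : 0 ≤ a) (hπ : a ≤ π) :
    2 * a * (1 + Real.cos a) ≤ Real.sin a * (π ^ 2 - a ^ 2) := by
  have hj : a / π ≤ Real.sin (a / 2) := by
    have := Real.mul_le_sin (x := a / 2) (by linarith) (by linarith)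
    calc a / π = 2 / π * (a / 2) := by field_simp
      _ ≤ Real.sin (a / 2) := this
  have hc : Real.cos (a / 2) ≤ π / 2 - a / 2 := by
    have h1 : Real.cos (a / 2) = Real.sin (π / 2 - a / 2) := by
      rw [Real.sin_pi_div_two_sub]
    rw [h1]
    exact Real.sin_le (by linarith)
  have hcnn : 0 ≤ Real.cos (a / 2) :=
    Real.cos_nonneg_of_mem_Icc ⟨by linarith [Real.pi_pos], by linarith⟩
  have hs : Real.sin a = 2 * Real.sin (a / 2) * Real.cos (a / 2) := by
    rw [show a = 2 * (a / 2) by ring, Real.sin_two_mul]; ring_nf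
  have hco : Real.cos a = 2 * Real.cos (a / 2) ^ 2 - 1 := by
    rw [show a = 2 * (a / 2) by ring, Real.cos_two_mul]; ring_nf
  have hkey : 2 * a * Real.cos (a / 2) ≤ Real.sin (a / 2) * (π ^ 2 - a ^ 2) := by
    have hπa : 0 ≤ π - a := by linarith
    have step1 : 2 * a * Real.cos (a / 2) ≤ a * (π - a) := by nlinarith
    have step2 : a * (π - a) ≤ a / π * (π ^ 2 - a ^ 2) := by
      have hππ : 0 < π := Real.pi_pos
      rw [div_mul_eq_mul_div, le_div_iff₀ hππ]
      nlinarith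
    have step3 : a / π * (π ^ 2 - a ^ 2) ≤ Real.sin (a / 2) * (π ^ 2 - a ^ 2) := by
      apply mul_le_mul_of_nonneg_right hj
      nlinarith
    linarith
  rw [hs, hco]
  nlinarith [mul_le_mul_of_nonneg_left hkey hcnn]

/-- Key lemma: for `a ∈ [0, π]` and `x ≥ 0`,
`cos a + sinc a * a²/2 ≤ cos x + sinc a * x²/2`. -/
lemma key_lemma {a x : ℝ} (ha0 : 0 ≤ a) (haπ : a ≤ π) (hx : 0 ≤ x) :
    Real.cos a + _root_.sinc a * a ^ 2 / 2 ≤ Real.cos x + _root_.sinc a * x ^ 2 / 2 := by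
  rcases eq_or_lt_of_le ha0 with rfl | hapos
  · simp only [_root_.sinc, if_pos rfl, Real.cos_zero]
    have := Real.one_sub_sq_div_two_le_cos (x := x)
    norm_num
    linarith
  have hsa : _root_.sinc a = Real.sin a / a := by rw [_root_.sinc, if_neg hapos.ne']
  have hsanng : 0 ≤ Real.sin a := Real.sin_nonneg_of_nonneg_of_le_pi ha0 haπ
  have hcnn : 0 ≤ _root_.sinc a := by rw [hsa]; positivity
  set c := _root_.sinc a with hc
  -- derivative facts
  have hderiv : ∀ y : ℝ, HasDerivAt (fun y => Real.cos y + c * y ^ 2 / 2)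
      (-Real.sin y + c * y) y := by
    intro y
    have h1 := (Real.hasDerivAt_cos y)
    have h2 : HasDerivAt (fun y : ℝ => c * y ^ 2 / 2) (c * y) y := by
      have := ((hasDerivAt_pow 2 y).const_mul c).div_const 2
      convert this using 1
      · rfl
      · rfl
      simp; ring
    exact h1.add h2
  rcases le_total x a with hxa | hax
  · -- antitone on [0, a]
    have hanti : AntitoneOn (fun y => Real.cos y + c * y ^ 2 / 2) (Set.Icc 0 a) := by
      apply antitoneOn_of_deriv_nonpos (convex_Icc 0 a)
      · exact Continuous.continuousOn (by continuity)
      · intro y _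
        exact (hderiv y).differentiableAt.differentiableWithinAt
      · intro y hy
        rw [interior_Icc] at hy
        rw [(hderiv y).deriv]
        have hb := sin_concave_bound hy.1.le hy.2.le haπ
        have : c * y ≤ Real.sin y := by
          rw [hsa]
          rw [div_mul_eq_mul_div, div_le_iff₀ hapos]
          nlinarith
        linarith
    exact hanti ⟨hx, hxa⟩ ⟨ha0, le_rfl⟩ hxa
  rcases le_total x π with hxπ | hπx
  · -- monotone on [a, π]
    have hmono : MonotoneOn (fun y => Real.cos y + c * y ^ 2 / 2) (Set.Icc a π) := by
      apply monotoneOn_of_deriv_nonneg (convex_Icc a π)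
      · exact Continuous.continuousOn (by continuity)
      · intro y _
        exact (hderiv y).differentiableAt.differentiableWithinAt
      · intro y hy
        rw [interior_Icc] at hy
        rw [(hderiv y).deriv]
        have hb := sin_concave_bound ha0 hy.1.le hy.2.le
        have : Real.sin y ≤ c * y := by
          rw [hsa]
          rw [div_mul_eq_mul_div, le_div_iff₀ hapos]
          nlinarith
        linarith
    exact hmono ⟨le_rfl, haπ⟩ ⟨hax, hxπ⟩ hax
  · -- x ≥ π
    have hF := F_bound ha0 haπ
    have hcx := Real.neg_one_le_cos x
    have hsq : π ^ 2 ≤ x ^ 2 := by nlinarith [Real.pi_pos]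
    have h2 : c * π ^ 2 / 2 ≤ c * x ^ 2 / 2 := by nlinarith
    have h3 : Real.cos a + c * a ^ 2 / 2 ≤ -1 + c * π ^ 2 / 2 := by
      rw [hsa, ← sub_nonneg]
      have expand : (-1 + Real.sin a / a * π ^ 2 / 2) - (Real.cos a + Real.sin a / a * a ^ 2 / 2)
          = (Real.sin a * (π ^ 2 - a ^ 2) - 2 * a * (1 + Real.cos a)) / (2 * a) := by
        field_simp; ring
      rw [expand]
      apply div_nonneg (by linarith) (by linarith)
    linarith

theorem cosine_surrogate (θ θ₀ : ℝ) (z₀ : ℤ)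
    (hz₀ : ∀ z : ℤ, |θ₀ + 2 * π * (z₀ : ℝ)| ≤ |θ₀ + 2 * π * (z : ℝ)|)
    (φ₀ : ℝ) (hφ₀ : φ₀ = θ₀ + 2 * π * (z₀ : ℝ)) :
    -Real.cos θ ≤ (1 / 2) * _root_.sinc φ₀ * (θ + 2 * π * (z₀ : ℝ)) ^ 2
      - Real.cos φ₀ - (1 / 2) * φ₀ * Real.sin φ₀ := by
  have hπpos := Real.pi_pos
  have h1 := hz₀ (z₀ + 1)
  have h2 := hz₀ (z₀ - 1)
  push_cast at h1 h2
  have e1 : θ₀ + 2 * π * ((z₀ : ℝ) + 1) = φ₀ + 2 * π := by rw [hφ₀]; ring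
  have e2 : θ₀ + 2 * π * ((z₀ : ℝ) - 1) = φ₀ - 2 * π := by rw [hφ₀]; ring
  rw [e1, ← hφ₀] at h1
  rw [e2, ← hφ₀] at h2
  have hsq1 : φ₀ ^ 2 ≤ (φ₀ + 2 * π) ^ 2 := by
    have := pow_le_pow_left₀ (abs_nonneg _) h1 2
    rwa [sq_abs, sq_abs] at this
  have hsq2 : φ₀ ^ 2 ≤ (φ₀ - 2 * π) ^ 2 := by
    have := pow_le_pow_left₀ (abs_nonneg _) h2 2
    rwa [sq_abs, sq_abs] at this
  have habs : |φ₀| ≤ π := by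
    rw [abs_le]; constructor <;> nlinarith
  set x := θ + 2 * π * (z₀ : ℝ) with hx
  have hcos : Real.cos θ = Real.cos x := by
    rw [hx, show θ + 2 * π * (z₀ : ℝ) = θ + (z₀ : ℝ) * (2 * π) by ring,
      Real.cos_add_int_mul_two_pi]
  have hkey := key_lemma (a := |φ₀|) (x := |x|) (abs_nonneg _) habs (abs_nonneg _)
  rw [Real.cos_abs, Real.cos_abs, sinc_abs, sq_abs, sq_abs] at hkey
  have hms := sinc_mul_sq φ₀
  rw [hcos]
  linarith [hkey, hms]
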